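/- Finite-time convergence from a differential inequality: Let v : [0,∞) → ℝ₊ be a C¹ function satisfying v'(t) ≤ −c·(v(t)^{(d+e)/d} + v(t)^{(D+E)/D}) for all t ≥ 0, where c > 0, d, D > 0, e < 0 with d + e > 0, and E > 0. Then v(t) = 0 for all t ≥ T* where T* = (1/c)·(D/E + d/|e|); in particular T* does not depend on v(0). -/

import Mathlib

set_option maxHeartbeats 1000000 in
/-- Uniform finite-time convergence from the bi-limit differential inequality:
the settling time `T* = (1/c)(D/E + d/|e|)` does not depend on the initial condition. -/
theorem finite_time_convergence (c d D e E : ℝ)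
    (hc : 0 < c) (hd : 0 < d) (hD : 0 < D) (he : e < 0) (hde : 0 < d + e) (hE : 0 < E)
    (v : ℝ → ℝ) (hv : ContDiff ℝ 1 v) (hvnn : ∀ t, 0 ≤ v t)
    (hineq : ∀ t ≥ (0:ℝ),
      deriv v t ≤ -c * (v t ^ ((d + e) / d) + v t ^ ((D + E) / D))) :
    ∀ t : ℝ, (1 / c) * (D / E + d / |e|) ≤ t → v t = 0 := by
  have hvdiff : Differentiable ℝ v := hv.differentiable one_ne_zero
  set A : ℝ := (d + e) / d with hAdef
  set B : ℝ := (D + E) / D with hBdef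
  have hA0 : 0 < A := div_pos hde hd
  have hA1 : A < 1 := (div_lt_one hd).2 (by linarith)
  have hB1 : 1 < B := (one_lt_div hD).2 (by linarith)
  set T1 : ℝ := D / (c * E) with hT1def
  have hT1pos : 0 < T1 := div_pos hD (mul_pos hc hE)
  -- v is nonincreasing on [0, ∞)
  have mono : AntitoneOn v (Set.Ici 0) := by
    apply antitoneOn_of_deriv_nonpos (convex_Ici 0) hvdiff.continuous.continuousOn
      hvdiff.differentiableOn
    intro x hx
    rw [interior_Ici] at hx
    have h1 : 0 ≤ v x ^ A := Real.rpow_nonneg (hvnn x) A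
    have h2 : 0 ≤ v x ^ B := Real.rpow_nonneg (hvnn x) B
    have := hineq x (le_of_lt hx)
    nlinarith
  -- Phase 1: v t ≤ 1 for t ≥ T1
  have step2 : ∀ t, T1 ≤ t → v t ≤ 1 := by
    intro t ht
    by_contra hcon
    push_neg at hcon
    have ht0 : 0 < t := lt_of_lt_of_le hT1pos ht
    have hpos : ∀ s ∈ Set.Icc (0:ℝ) t, 1 < v s := by
      intro s hs
      exact lt_of_lt_of_le hcon (mono hs.1 (Set.mem_Ici.2 (le_trans hs.1 hs.2)) hs.2)
    set φ : ℝ → ℝ := fun s => (B - 1) * c * s - v s ^ (1 - B) with hφdef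
    have hder : ∀ s ∈ Set.Icc (0:ℝ) t, HasDerivAt φ
        ((B - 1) * c - deriv v s * (1 - B) * v s ^ (1 - B - 1)) s := by
      intro s hs
      have hvs : v s ≠ 0 := by linarith [hpos s hs]
      exact ((hasDerivAt_id s).const_mul ((B - 1) * c) |>.congr_deriv (mul_one _)).sub
        (((hvdiff s).hasDerivAt).rpow_const (Or.inl hvs))
    have hanti : AntitoneOn φ (Set.Icc 0 t) := by
      apply antitoneOn_of_deriv_nonpos (convex_Icc 0 t)
        (fun s hs => (hder s hs).continuousAt.continuousWithinAt)
        (fun s hs => ((hder s (interior_subset hs)).differentiableAt).differentiableWithinAt)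
      intro s hs
      rw [interior_Icc] at hs
      have hs' : s ∈ Set.Icc (0:ℝ) t := ⟨le_of_lt hs.1, le_of_lt hs.2⟩
      rw [(hder s hs').deriv]
      have hvs1 : 1 < v s := hpos s hs'
      have hvs0 : 0 < v s := by linarith
      have hdv : deriv v s ≤ -c * v s ^ B := by
        have h1 : 0 ≤ v s ^ A := Real.rpow_nonneg (hvnn s) A
        have := hineq s (le_of_lt hs.1)
        nlinarith
      have hkey : deriv v s * (1 - B) * v s ^ (1 - B - 1) ≥ (B - 1) * c := by
        have h1 : 1 - B - 1 = -B := by ring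
        rw [h1, Real.rpow_neg (le_of_lt hvs0)]
        have hvB : 0 < v s ^ B := Real.rpow_pos_of_pos hvs0 B
        have h2 : deriv v s * (1 - B) ≥ -c * v s ^ B * (1 - B) := by nlinarith
        calc deriv v s * (1 - B) * (v s ^ B)⁻¹ ≥ (-c * v s ^ B * (1 - B)) * (v s ^ B)⁻¹ := by
              apply mul_le_mul_of_nonneg_right h2 (le_of_lt (inv_pos.2 hvB))
          _ = c * (B - 1) * (v s ^ B * (v s ^ B)⁻¹) := by ring
          _ = (B - 1) * c := by rw [mul_inv_cancel₀ (ne_of_gt hvB)]; ring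
      linarith
    have hφt : φ t ≤ φ 0 := hanti (Set.left_mem_Icc.2 (le_of_lt ht0))
      (Set.mem_Icc.2 ⟨le_of_lt ht0, le_rfl⟩) (le_of_lt ht0)
    have hv0pos : 0 < v 0 := by linarith [hpos 0 (Set.left_mem_Icc.2 (le_of_lt ht0))]
    have h3 : v t ^ (1 - B) < 1 :=
      Real.rpow_lt_one_of_one_lt_of_neg hcon (by linarith)
    have h4 : 0 < v 0 ^ (1 - B) := Real.rpow_pos_of_pos hv0pos _
    have h5 : 1 ≤ (B - 1) * c * t := by
      have : (B - 1) * c * T1 = 1 := by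
        rw [hT1def, hBdef]; field_simp; ring
      nlinarith [mul_le_mul_of_nonneg_left ht (le_of_lt (mul_pos (by linarith : (0:ℝ) < B - 1) hc))]
    simp only [hφdef] at hφt
    nlinarith
  -- Phase 2
  intro t ht
  have habs : |e| = -e := abs_of_neg he
  have hT2 : T1 + d / (c * (-e)) ≤ t := by
    have : (1 / c) * (D / E + d / |e|) = T1 + d / (c * (-e)) := by
      rw [habs, hT1def]; field_simp [hc.ne', hE.ne', ne_of_lt he]
    linarith [this ▸ ht]
  have hT2pos : 0 < d / (c * (-e)) := div_pos hd (mul_pos hc (by linarith))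
  by_contra hcon
  have hvt : 0 < v t := lt_of_le_of_ne (hvnn t) (Ne.symm hcon)
  have htT1 : T1 ≤ t := by linarith
  have hpos : ∀ s ∈ Set.Icc T1 t, 0 < v s := by
    intro s hs
    exact lt_of_lt_of_le hvt (mono (Set.mem_Ici.2 (le_trans (le_of_lt hT1pos) hs.1))
      (Set.mem_Ici.2 (le_trans (le_of_lt hT1pos) (le_trans hs.1 hs.2))) hs.2)
  set ψ : ℝ → ℝ := fun s => v s ^ (1 - A) + (1 - A) * c * s with hψdef
  have hder : ∀ s ∈ Set.Icc T1 t, HasDerivAt ψ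
      (deriv v s * (1 - A) * v s ^ (1 - A - 1) + (1 - A) * c) s := by
    intro s hs
    have hvs : v s ≠ 0 := ne_of_gt (hpos s hs)
    exact (((hvdiff s).hasDerivAt).rpow_const (Or.inl hvs)).add
      ((hasDerivAt_id s).const_mul ((1 - A) * c) |>.congr_deriv (mul_one _))
  have hanti : AntitoneOn ψ (Set.Icc T1 t) := by
    apply antitoneOn_of_deriv_nonpos (convex_Icc T1 t)
      (fun s hs => (hder s hs).continuousAt.continuousWithinAt)
      (fun s hs => ((hder s (interior_subset hs)).differentiableAt).differentiableWithinAt)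
    intro s hs
    rw [interior_Icc] at hs
    have hs' : s ∈ Set.Icc T1 t := ⟨le_of_lt hs.1, le_of_lt hs.2⟩
    rw [(hder s hs').deriv]
    have hvs0 : 0 < v s := hpos s hs'
    have hdv : deriv v s ≤ -c * v s ^ A := by
      have h2 : 0 ≤ v s ^ B := Real.rpow_nonneg (hvnn s) B
      have := hineq s (by linarith [hs.1, hT1pos])
      nlinarith
    have h1 : 1 - A - 1 = -A := by ring
    rw [h1, Real.rpow_neg (le_of_lt hvs0)]
    have hvA : 0 < v s ^ A := Real.rpow_pos_of_pos hvs0 A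
    have h2 : deriv v s * (1 - A) ≤ -c * v s ^ A * (1 - A) := by nlinarith
    have h3 : deriv v s * (1 - A) * (v s ^ A)⁻¹ ≤ (-c * v s ^ A * (1 - A)) * (v s ^ A)⁻¹ :=
      mul_le_mul_of_nonneg_right h2 (le_of_lt (inv_pos.2 hvA))
    have h4 : (-c * v s ^ A * (1 - A)) * (v s ^ A)⁻¹ = -c * (1 - A) * (v s ^ A * (v s ^ A)⁻¹) := by
      ring
    rw [h4, mul_inv_cancel₀ (ne_of_gt hvA)] at h3
    linarith [h3]
  have hψt : ψ t ≤ ψ T1 := hanti (Set.left_mem_Icc.2 htT1) (Set.right_mem_Icc.2 htT1) htT1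
  have hvT1 : v T1 ≤ 1 := step2 T1 le_rfl
  have h5 : v T1 ^ (1 - A) ≤ 1 :=
    Real.rpow_le_one (hvnn T1) hvT1 (by linarith)
  have h6 : 0 < v t ^ (1 - A) := Real.rpow_pos_of_pos hvt _
  have h7 : 1 ≤ (1 - A) * c * (t - T1) := by
    have he1 : (1 - A) * c * (d / (c * (-e))) = 1 := by
      rw [hAdef]; field_simp [hc.ne', hd.ne', ne_of_lt he]; ring
    have hK : d / (c * (-e)) ≤ t - T1 := by linarith
    have hcA : (0:ℝ) ≤ (1 - A) * c := le_of_lt (mul_pos (by linarith) hc)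
    have h8 : (1 - A) * c * (d / (c * (-e))) ≤ (1 - A) * c * (t - T1) :=
      mul_le_mul_of_nonneg_left hK hcA
    linarith
  simp only [hψdef] at hψt
  nlinarith [hψt, h5, h6, h7]
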